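/- Let 0 < α ≤ β and let λ be a real number with 1/β ≤ λ ≤ 1/α, and let 0 < h ≤ 1/β. Then 0 ≤ √(λ/(1 − h/(2λ))) − √λ ≤ √β·h. -/
import Mathlib


/-- Eigenvalue estimate for the biased covariance of the unadjusted Langevin algorithm for a
Gaussian target: for `1/β ≤ λ ≤ 1/α` and `0 < h ≤ 1/β`,
`0 ≤ √(λ/(1 - h/(2λ))) - √λ ≤ √β · h`. -/
theorem statement4
    (α β lam h : ℝ) (hα : 0 < α) (hαβ : α ≤ β)
    (hlam1 : 1 / β ≤ lam) (hlam2 : lam ≤ 1 / α)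
    (hh0 : 0 < h) (hh : h ≤ 1 / β) :
    0 ≤ Real.sqrt (lam / (1 - h / (2 * lam))) - Real.sqrt lam ∧
      Real.sqrt (lam / (1 - h / (2 * lam))) - Real.sqrt lam ≤ Real.sqrt β * h := by
  have hβ : 0 < β := lt_of_lt_of_le hα hαβ
  have hlam0 : 0 < lam := lt_of_lt_of_le (by positivity) hlam1
  have hhl : h ≤ lam := hh.trans hlam1
  have ht2 : h / (2 * lam) * (2 * lam) = h :=
    div_mul_cancel₀ _ (by positivity)
  have ht : h / (2 * lam) ≤ 1 / 2 := by
    rw [div_le_div_iff₀ (by positivity) (by norm_num)]; nlinarith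
  have hden : 0 < 1 - h / (2 * lam) := by
    have : 0 < h / (2 * lam) := by positivity
    linarith
  have hlb : 1 ≤ lam * β := (div_le_iff₀ hβ).mp hlam1
  have hsb : 1 ≤ Real.sqrt lam * Real.sqrt β := by
    rw [← Real.sqrt_mul hlam0.le]
    have := Real.sqrt_le_sqrt hlb
    simpa using this
  have hsl : Real.sqrt lam ^ 2 = lam := Real.sq_sqrt hlam0.le
  have hsb2 : Real.sqrt β ^ 2 = β := Real.sq_sqrt hβ.le
  constructor
  · have hmon : lam ≤ lam / (1 - h / (2 * lam)) := by
      rw [le_div_iff₀ hden]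
      have : 0 < h / (2 * lam) := by positivity
      nlinarith
    have := Real.sqrt_le_sqrt hmon
    linarith
  · have key : lam / (1 - h / (2 * lam)) ≤ (Real.sqrt lam + Real.sqrt β * h) ^ 2 := by
      have h1 : lam / (1 - h / (2 * lam)) ≤ lam + h := by
        rw [div_le_iff₀ hden]
        nlinarith
      have h2 : lam + h ≤ (Real.sqrt lam + Real.sqrt β * h) ^ 2 := by
        have hb0 : 0 ≤ Real.sqrt β := Real.sqrt_nonneg _
        nlinarith [mul_le_mul_of_nonneg_right hsb hh0.le, sq_nonneg (Real.sqrt β * h)]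
      linarith
    have := Real.sqrt_le_sqrt key
    rw [Real.sqrt_sq (by positivity)] at this
    linarith
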